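/- (Volterra equation, existence and uniqueness) Let 𝓜 = ℂ^{L×L}, let g ∈ ℓ^∞(ℕ, 𝓜), and let K(n,m) ∈ 𝓜 for n,m ∈ ℕ. Suppose there is M ∈ ℓ¹(ℕ, ℝ) with ‖K(n,m)‖ ≤ M(m) for all n,m. Then the Volterra equation f(n) = g(n) + ∑_{m=n+1}^∞ K(n,m) f(m) has a unique solution f ∈ ℓ^∞(ℕ, 𝓜). -/

import Mathlib

open Finset Filter Topology

namespace Volterra

variable {E : Type*} [NormedRing E] [CompleteSpace E]

noncomputable def S (M : ℕ → ℝ) (n : ℕ) : ℝ := ∑' j, M (n + 1 + j)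

noncomputable def w (M : ℕ → ℝ) (n : ℕ) : ℝ := Real.exp (2 * S M n)

lemma sumS (M : ℕ → ℝ) (hM : Summable M) (n : ℕ) : Summable (fun j => M (n + 1 + j)) :=
  hM.comp_injective (fun a b h => by omega)

lemma S_nonneg {M : ℕ → ℝ} (hM0 : ∀ m, 0 ≤ M m) (n : ℕ) : 0 ≤ S M n :=
  tsum_nonneg (fun j => hM0 _)

lemma S_succ {M : ℕ → ℝ} (hM : Summable M) (n : ℕ) :
    S M n = M (n + 1) + S M (n + 1) := by
  have h := Summable.tsum_eq_zero_add (sumS M hM n)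
  simp only [S]
  rw [h]
  congr 1
  apply tsum_congr
  intro j
  congr 1
  omega

lemma S_mono {M : ℕ → ℝ} (hM : Summable M) (hM0 : ∀ m, 0 ≤ M m) :
    Antitone (S M) := by
  apply antitone_nat_of_succ_le
  intro n
  rw [S_succ hM n]
  linarith [hM0 (n + 1)]

lemma w_pos {M : ℕ → ℝ} (n : ℕ) : 0 < w M n := Real.exp_pos _

lemma one_le_w {M : ℕ → ℝ} (hM0 : ∀ m, 0 ≤ M m) (n : ℕ) : 1 ≤ w M n :=
  Real.one_le_exp (by linarith [S_nonneg hM0 n])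

lemma w_le {M : ℕ → ℝ} (hM : Summable M) (hM0 : ∀ m, 0 ≤ M m) (n : ℕ) : w M n ≤ w M 0 :=
  Real.exp_le_exp.mpr (by linarith [S_mono hM hM0 (Nat.zero_le n)])

lemma sumMw {M : ℕ → ℝ} (hM : Summable M) (hM0 : ∀ m, 0 ≤ M m) (n : ℕ) :
    Summable (fun j => M (n + 1 + j) * w M (n + 1 + j)) := by
  apply Summable.of_nonneg_of_le
    (fun j => mul_nonneg (hM0 _) (w_pos _).le)
    (fun j => by
      have := w_le hM hM0 (n + 1 + j)
      exact mul_le_mul_of_nonneg_left this (hM0 _))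
  exact (sumS M hM n).mul_right _

lemma key {M : ℕ → ℝ} (hM : Summable M) (hM0 : ∀ m, 0 ≤ M m) (n : ℕ) :
    ∑' j, M (n + 1 + j) * w M (n + 1 + j) ≤ w M n / 2 := by
  have hpart : ∀ N, ∑ j ∈ range N, M (n + 1 + j) * w M (n + 1 + j)
      ≤ (w M n - w M (n + N)) / 2 := by
    intro N
    induction N with
    | zero => simp
    | succ N ih =>
        rw [Finset.sum_range_succ]
        have hstep : M (n + 1 + N) * w M (n + 1 + N)
            ≤ (w M (n + N) - w M (n + 1 + N)) / 2 := by
          have h1 : w M (n + N) = Real.exp (2 * M (n + N + 1)) * w M (n + N + 1) := by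
            rw [w, w, S_succ hM (n + N), ← Real.exp_add]
            ring_nf
          have h2 : 1 + 2 * M (n + N + 1) ≤ Real.exp (2 * M (n + N + 1)) := by
            have := Real.add_one_le_exp (2 * M (n + N + 1))
            linarith
          have h3 : (1 + 2 * M (n + N + 1)) * w M (n + N + 1) ≤ w M (n + N) := by
            rw [h1]
            exact mul_le_mul_of_nonneg_right h2 (w_pos _).le
          have h4 : n + N + 1 = n + 1 + N := by omega
          rw [← h4]
          nlinarith [w_pos (M := M) (n + N + 1)]
        have h5 : n + 1 + N = n + (N + 1) := by omega
        rw [h5] at hstep ⊢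
        linarith
  apply Real.tsum_le_of_sum_range_le (fun j => mul_nonneg (hM0 _) (w_pos _).le)
  intro N
  have := hpart N
  have := (w_pos (M := M) (n + N)).le
  linarith


section Op

variable (K : ℕ → ℕ → E) (g : ℕ → E) {M : ℕ → ℝ}

noncomputable def T (h : ℕ → E) (n : ℕ) : E := g n + ∑' j, K n (n + 1 + j) * h (n + 1 + j)

lemma sumKh (hM : Summable M) (hK : ∀ n m, ‖K n m‖ ≤ M m)
    {h : ℕ → E} {C : ℝ} (hC : ∀ m, ‖h m‖ ≤ C) (n : ℕ) :
    Summable (fun j => K n (n + 1 + j) * h (n + 1 + j)) := by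
  have hC0 : 0 ≤ C := (norm_nonneg (h 0)).trans (hC 0)
  have hM0 : ∀ m, 0 ≤ M m := fun m => (norm_nonneg (K 0 m)).trans (hK 0 m)
  apply Summable.of_norm_bounded ((sumS M hM n).mul_right C)
  intro j
  exact (norm_mul_le _ _).trans (mul_le_mul (hK _ _) (hC _) (norm_nonneg _) (hM0 _))

lemma Tdiff (hM : Summable M) (hK : ∀ n m, ‖K n m‖ ≤ M m)
    {h h' : ℕ → E} {C C' D : ℝ} (hC : ∀ m, ‖h m‖ ≤ C) (hC' : ∀ m, ‖h' m‖ ≤ C')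
    (hd : ∀ m, ‖h m - h' m‖ ≤ D * w M m) (n : ℕ) :
    ‖T K g h n - T K g h' n‖ ≤ D / 2 * w M n := by
  have hM0 : ∀ m, 0 ≤ M m := fun m => (norm_nonneg (K 0 m)).trans (hK 0 m)
  have hD0 : 0 ≤ D := by
    by_contra hD
    push_neg at hD
    have h0 := (norm_nonneg (h 0 - h' 0)).trans (hd 0)
    nlinarith [w_pos (M := M) 0]
  have hs := sumKh K hM hK hC n
  have hs' := sumKh K hM hK hC' n
  have heq : T K g h n - T K g h' n
      = ∑' j, K n (n + 1 + j) * (h (n + 1 + j) - h' (n + 1 + j)) := by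
    rw [T, T, add_sub_add_left_eq_sub, ← Summable.tsum_sub hs hs']
    apply tsum_congr
    intro j
    rw [mul_sub]
  rw [heq]
  have hbnd : ∀ j : ℕ, ‖K n (n + 1 + j) * (h (n + 1 + j) - h' (n + 1 + j))‖
      ≤ M (n + 1 + j) * (D * w M (n + 1 + j)) := fun j =>
    (norm_mul_le _ _).trans (mul_le_mul (hK _ _) (hd _) (norm_nonneg _) (hM0 _))
  have hsb : Summable (fun j => M (n + 1 + j) * (D * w M (n + 1 + j))) := by
    have : (fun j => M (n + 1 + j) * (D * w M (n + 1 + j)))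
        = (fun j => D * (M (n + 1 + j) * w M (n + 1 + j))) := by
      funext j; ring
    rw [this]
    exact (sumMw hM hM0 n).mul_left D
  calc ‖∑' j, K n (n + 1 + j) * (h (n + 1 + j) - h' (n + 1 + j))‖
      ≤ ∑' j, ‖K n (n + 1 + j) * (h (n + 1 + j) - h' (n + 1 + j))‖ :=
        norm_tsum_le_tsum_norm (Summable.of_nonneg_of_le (fun j => norm_nonneg _) hbnd hsb)
    _ ≤ ∑' j, M (n + 1 + j) * (D * w M (n + 1 + j)) :=
        Summable.tsum_le_tsum hbnd (Summable.of_nonneg_of_le (fun j => norm_nonneg _) hbnd hsb) hsb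
    _ = D * ∑' j, M (n + 1 + j) * w M (n + 1 + j) := by
        rw [← tsum_mul_left]
        apply tsum_congr
        intro j; ring
    _ ≤ D * (w M n / 2) :=
        mul_le_mul_of_nonneg_left (key hM hM0 n) hD0
    _ = D / 2 * w M n := by ring

lemma Tbound (hM : Summable M) (hK : ∀ n m, ‖K n m‖ ≤ M m)
    {h : ℕ → E} {C Cg : ℝ} (hg : ∀ n, ‖g n‖ ≤ Cg) (hC : ∀ m, ‖h m‖ ≤ C) (n : ℕ) :
    ‖T K g h n‖ ≤ Cg + C * S M 0 := by
  have hC0 : 0 ≤ C := (norm_nonneg (h 0)).trans (hC 0)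
  have hM0 : ∀ m, 0 ≤ M m := fun m => (norm_nonneg (K 0 m)).trans (hK 0 m)
  have hbnd : ∀ j : ℕ, ‖K n (n + 1 + j) * h (n + 1 + j)‖ ≤ M (n + 1 + j) * C := fun j =>
    (norm_mul_le _ _).trans (mul_le_mul (hK _ _) (hC _) (norm_nonneg _) (hM0 _))
  have hsb : Summable (fun j => M (n + 1 + j) * C) := (sumS M hM n).mul_right C
  calc ‖T K g h n‖ ≤ ‖g n‖ + ‖∑' j, K n (n + 1 + j) * h (n + 1 + j)‖ := norm_add_le _ _
    _ ≤ Cg + ∑' j, ‖K n (n + 1 + j) * h (n + 1 + j)‖ := by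
        gcongr
        · exact hg n
        · exact norm_tsum_le_tsum_norm (Summable.of_nonneg_of_le (fun j => norm_nonneg _) hbnd hsb)
    _ ≤ Cg + ∑' j, M (n + 1 + j) * C := by
        exact add_le_add le_rfl (Summable.tsum_le_tsum hbnd (Summable.of_nonneg_of_le (fun j => norm_nonneg _) hbnd hsb) hsb)
    _ = Cg + S M n * C := by rw [tsum_mul_right]; rfl
    _ ≤ Cg + C * S M 0 := by
        have := S_mono hM hM0 (Nat.zero_le n)
        have := S_nonneg hM0 n
        nlinarith

end Op

end Volterra

theorem stmt5 (L : ℕ)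
    (g : ℕ → ((Fin L → ℂ) →L[ℂ] (Fin L → ℂ)))
    (hg : ∃ C, ∀ n, ‖g n‖ ≤ C)
    (K : ℕ → ℕ → ((Fin L → ℂ) →L[ℂ] (Fin L → ℂ)))
    (M : ℕ → ℝ) (hM : Summable M)
    (hK : ∀ n m, ‖K n m‖ ≤ M m) :
    ∃! f : {f : ℕ → ((Fin L → ℂ) →L[ℂ] (Fin L → ℂ)) // ∃ C, ∀ n, ‖f n‖ ≤ C},
      ∀ n : ℕ, f.1 n = g n + ∑' j : ℕ, K n (n + 1 + j) * f.1 (n + 1 + j) := by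
  obtain ⟨Cg', hg'⟩ := hg
  set Cg : ℝ := max Cg' 0 with hCgdef
  have hg0 : ∀ n, ‖g n‖ ≤ Cg := fun n => (hg' n).trans (le_max_left _ _)
  have hCg0 : 0 ≤ Cg := le_max_right _ _
  have hM0 : ∀ m, 0 ≤ M m := fun m => (norm_nonneg (K 0 m)).trans (hK 0 m)
  have hw1 := Volterra.one_le_w (M := M) hM0
  have hwpos := Volterra.w_pos (M := M)
  have hwle := Volterra.w_le hM hM0
  set F : ℕ → ℕ → ((Fin L → ℂ) →L[ℂ] (Fin L → ℂ)) :=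
    fun k => (Volterra.T K g)^[k] (fun _ => 0) with hF
  have hFsucc : ∀ k, F (k + 1) = Volterra.T K g (F k) :=
    fun k => Function.iterate_succ_apply' (Volterra.T K g) k _
  -- all iterates are bounded
  have hbdd : ∀ k, ∃ C, ∀ n, ‖F k n‖ ≤ C := by
    intro k
    induction k with
    | zero => exact ⟨0, fun n => by simp [hF]⟩
    | succ k ih =>
        obtain ⟨C, hC⟩ := ih
        exact ⟨Cg + C * Volterra.S M 0, fun n => by
          rw [hFsucc k]; exact Volterra.Tbound K g hM hK hg0 hC n⟩
  -- geometric decay of increments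
  have hinc : ∀ k n, ‖F (k + 1) n - F k n‖ ≤ Cg * (1 / 2) ^ k * Volterra.w M n := by
    intro k
    induction k with
    | zero =>
        intro n
        have h1 : F 1 n = g n := by
          rw [hFsucc 0]
          show Volterra.T K g (F 0) n = g n
          have : (fun j => K n (n + 1 + j) * F 0 (n + 1 + j)) = fun _ => (0 : ((Fin L → ℂ) →L[ℂ] (Fin L → ℂ))) := by
            funext j
            simp [hF]
          rw [Volterra.T, this, tsum_zero, add_zero]
        have h0 : F 0 n = 0 := by simp [hF]
        rw [h1, h0, sub_zero]
        calc ‖g n‖ ≤ Cg := hg0 n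
          _ = Cg * (1 / 2 : ℝ) ^ 0 * 1 := by ring
          _ ≤ Cg * (1 / 2) ^ 0 * Volterra.w M n :=
              mul_le_mul_of_nonneg_left (hw1 n) (mul_nonneg hCg0 (by positivity))
    | succ k ih =>
        intro n
        obtain ⟨C, hC⟩ := hbdd (k + 1)
        obtain ⟨C', hC'⟩ := hbdd k
        have := Volterra.Tdiff K g hM hK hC hC' ih n
        rw [← hFsucc, ← hFsucc] at this
        calc ‖F (k + 1 + 1) n - F (k + 1) n‖ ≤ Cg * (1 / 2) ^ k / 2 * Volterra.w M n := this
          _ = Cg * (1 / 2) ^ (k + 1) * Volterra.w M n := by ring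
  -- uniform geometric bound
  have hgeo : ∀ n k, dist (F k n) (F (k + 1) n) ≤ Cg * Volterra.w M 0 * (1 / 2) ^ k := by
    intro n k
    rw [dist_eq_norm, norm_sub_rev]
    calc ‖F (k + 1) n - F k n‖ ≤ Cg * (1 / 2) ^ k * Volterra.w M n := hinc k n
      _ ≤ Cg * (1 / 2) ^ k * Volterra.w M 0 :=
          mul_le_mul_of_nonneg_left (hwle n) (mul_nonneg hCg0 (by positivity))
      _ = Cg * Volterra.w M 0 * (1 / 2) ^ k := by ring
  have hhalf : (1 / 2 : ℝ) < 1 := by norm_num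
  -- pointwise limits
  have hex : ∀ n, ∃ x : ((Fin L → ℂ) →L[ℂ] (Fin L → ℂ)), Filter.Tendsto (fun k => F k n) Filter.atTop (nhds x) := by
    intro n
    exact cauchySeq_tendsto_of_complete (cauchySeq_of_le_geometric _ _ hhalf (hgeo n))
  choose f hf using hex
  -- distance from iterates to the limit
  have htail : ∀ k n, ‖F k n - f n‖ ≤ 2 * (Cg * Volterra.w M 0) * (1 / 2) ^ k := by
    intro k n
    have := dist_le_of_le_geometric_of_tendsto (1 / 2) (Cg * Volterra.w M 0)
      hhalf (hgeo n) (hf n) k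
    rw [dist_eq_norm] at this
    calc ‖F k n - f n‖ ≤ Cg * Volterra.w M 0 * (1 / 2) ^ k / (1 - 1 / 2) := this
      _ = 2 * (Cg * Volterra.w M 0) * (1 / 2) ^ k := by ring
  -- the limit is bounded
  have hfb : ∀ n, ‖f n‖ ≤ 2 * (Cg * Volterra.w M 0) := by
    intro n
    have := htail 0 n
    have h0 : F 0 n = 0 := by simp [hF]
    rw [h0, zero_sub, norm_neg, pow_zero, mul_one] at this
    exact this
  have hfb0 : 0 ≤ 2 * (Cg * Volterra.w M 0) := (norm_nonneg (f 0)).trans (hfb 0)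
  -- the limit satisfies the equation
  have heqn : ∀ n, f n = Volterra.T K g f n := by
    intro n
    have h1 : Filter.Tendsto (fun k => F (k + 1) n) Filter.atTop (nhds (f n)) :=
      (hf n).comp (Filter.tendsto_add_atTop_nat 1)
    have h2 : Filter.Tendsto (fun k => F (k + 1) n) Filter.atTop (nhds (Volterra.T K g f n)) := by
      rw [tendsto_iff_norm_sub_tendsto_zero]
      apply squeeze_zero (fun k => norm_nonneg _)
        (g := fun k => (2 * (Cg * Volterra.w M 0) * (1 / 2) ^ k) / 2 * Volterra.w M n)
      · intro k
        obtain ⟨C, hC⟩ := hbdd k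
        have hd : ∀ m, ‖F k m - f m‖
            ≤ (2 * (Cg * Volterra.w M 0) * (1 / 2) ^ k) * Volterra.w M m := by
          intro m
          calc ‖F k m - f m‖ ≤ 2 * (Cg * Volterra.w M 0) * (1 / 2) ^ k := htail k m
            _ = (2 * (Cg * Volterra.w M 0) * (1 / 2) ^ k) * 1 := by ring
            _ ≤ _ :=
                mul_le_mul_of_nonneg_left (hw1 m) (mul_nonneg hfb0 (by positivity))
        have := Volterra.Tdiff K g hM hK hC hfb hd n
        rw [← hFsucc] at this
        exact this
      · have : Filter.Tendsto (fun k : ℕ => (1 / 2 : ℝ) ^ k) Filter.atTop (nhds 0) :=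
          tendsto_pow_atTop_nhds_zero_of_lt_one (by norm_num) hhalf
        have h3 := (this.const_mul (2 * (Cg * Volterra.w M 0))).div_const 2
        have h4 := h3.mul_const (Volterra.w M n)
        simpa using h4
    exact tendsto_nhds_unique h1 h2
  -- uniqueness of bounded solutions
  have huniq : ∀ f1 f2 : ℕ → ((Fin L → ℂ) →L[ℂ] (Fin L → ℂ)), (∃ C, ∀ n, ‖f1 n‖ ≤ C) → (∃ C, ∀ n, ‖f2 n‖ ≤ C) →
      (∀ n, f1 n = Volterra.T K g f1 n) → (∀ n, f2 n = Volterra.T K g f2 n) → f1 = f2 := by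
    intro f1 f2 ⟨C1, hC1⟩ ⟨C2, hC2⟩ he1 he2
    have hC10 : 0 ≤ C1 := (norm_nonneg (f1 0)).trans (hC1 0)
    have hC20 : 0 ≤ C2 := (norm_nonneg (f2 0)).trans (hC2 0)
    have hiter : ∀ k m, ‖f1 m - f2 m‖ ≤ (C1 + C2) * (1 / 2) ^ k * Volterra.w M m := by
      intro k
      induction k with
      | zero =>
          intro m
          calc ‖f1 m - f2 m‖ ≤ ‖f1 m‖ + ‖f2 m‖ := norm_sub_le _ _
            _ ≤ C1 + C2 := add_le_add (hC1 m) (hC2 m)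
            _ = (C1 + C2) * (1 / 2 : ℝ) ^ 0 * 1 := by ring
            _ ≤ _ :=
                mul_le_mul_of_nonneg_left (hw1 m)
                  (mul_nonneg (by linarith) (by positivity))
      | succ k ih =>
          intro m
          have := Volterra.Tdiff K g hM hK hC1 hC2 ih m
          rw [← he1, ← he2] at this
          calc ‖f1 m - f2 m‖ ≤ (C1 + C2) * (1 / 2) ^ k / 2 * Volterra.w M m := this
            _ = (C1 + C2) * (1 / 2) ^ (k + 1) * Volterra.w M m := by ring
    funext m
    have hlim : Filter.Tendsto
        (fun k : ℕ => (C1 + C2) * (1 / 2) ^ k * Volterra.w M m) Filter.atTop (nhds 0) := by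
      have : Filter.Tendsto (fun k : ℕ => (1 / 2 : ℝ) ^ k) Filter.atTop (nhds 0) :=
        tendsto_pow_atTop_nhds_zero_of_lt_one (by norm_num) hhalf
      have h3 := (this.const_mul (C1 + C2)).mul_const (Volterra.w M m)
      simpa using h3
    have : ‖f1 m - f2 m‖ ≤ 0 :=
      le_of_tendsto_of_tendsto' tendsto_const_nhds hlim (fun k => hiter k m)
    have := le_antisymm this (norm_nonneg _)
    rwa [norm_eq_zero, sub_eq_zero] at this
  -- conclusion
  refine ⟨⟨f, 2 * (Cg * Volterra.w M 0), hfb⟩, fun n => heqn n, ?_⟩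
  rintro ⟨f2, C2, hC2⟩ hf2
  apply Subtype.ext
  exact huniq f2 f ⟨C2, hC2⟩ ⟨_, hfb⟩ (fun n => hf2 n) heqn
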